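/- Suppose there exist C > 0 and ν ≥ 1 such that dist((t ã_0/(2π), …, t ã_m/(2π)), ℤ^{m+1}) ≥ C t^{1−ν} for every real t ≥ 1. Then there exists c > 0 such that for every z ∈ ℂ^{m+1}, every integer k and every real t ≥ 1, Σ_{j=0}^{m} |e^{i a_j t} − e^{2πi k r_j/q_0}|·|z_j| ≥ c · t^{1−ν} · min_{0≤j≤m} |z_j|. -/

import Mathlib

open scoped Real

/-- The set of integer lattice points in Euclidean space `ℝ^{m+1}`. -/
def intLattice (m : ℕ) : Set (EuclideanSpace ℝ (Fin (m + 1))) :=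
  {w | ∀ j, ∃ n : ℤ, w j = (n : ℝ)}

lemma abs_exp_I_sub_one (ψ : ℝ) :
    ‖Complex.exp ((ψ : ℂ) * Complex.I) - 1‖ = 2 * |Real.sin (ψ / 2)| := by
  have h1 : Complex.exp ((ψ : ℂ) * Complex.I) - 1
      = ((Real.cos ψ - 1 : ℝ) : ℂ) + ((Real.sin ψ : ℝ) : ℂ) * Complex.I := by
    rw [Complex.exp_mul_I, ← Complex.ofReal_cos, ← Complex.ofReal_sin]; push_cast; ring
  rw [h1, Complex.norm_def, Complex.normSq_add_mul_I]
  have hc : Real.cos ψ = 1 - 2 * Real.sin (ψ / 2) ^ 2 := by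
    have h2 := Real.cos_two_mul' (ψ / 2)
    have h3 := Real.sin_sq_add_cos_sq (ψ / 2)
    rw [show 2 * (ψ / 2) = ψ by ring] at h2
    nlinarith
  have h4 : (Real.cos ψ - 1) ^ 2 + Real.sin ψ ^ 2 = (2 * |Real.sin (ψ / 2)|) ^ 2 := by
    have h5 := Real.sin_sq_add_cos_sq ψ
    have h6 := sq_abs (Real.sin (ψ / 2))
    nlinarith
  rw [h4, Real.sqrt_sq (by positivity)]

lemma two_mul_dist_le_abs_sin (x : ℝ) : 2 * |x - round x| ≤ |Real.sin (π * x)| := by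
  set y := x - round x with hy
  have hy2 : |y| ≤ 1 / 2 := abs_sub_round x
  have hx : π * x = π * y + (round x : ℤ) * π := by rw [hy]; push_cast; ring
  have habs1 : |((-1 : ℝ)) ^ (round x)| = 1 := by
    rcases Int.even_or_odd (round x) with he | ho
    · rw [he.neg_one_zpow]; simp
    · rw [ho.neg_one_zpow]; simp
  rw [hx, Real.sin_add_int_mul_pi, abs_mul, habs1, one_mul]
  have hpi := Real.pi_pos
  have h1 : |Real.sin (π * y)| = Real.sin (π * |y|) := by
    rcases abs_cases y with ⟨h, h0⟩ | ⟨h, h0⟩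
    · rw [h]
      exact abs_of_nonneg (Real.sin_nonneg_of_nonneg_of_le_pi (by positivity) (by nlinarith))
    · rw [h, show π * -y = -(π * y) by ring, Real.sin_neg, ← abs_neg, ← Real.sin_neg,
        show -(π * y) = π * -y by ring]
      exact abs_of_nonneg (Real.sin_nonneg_of_nonneg_of_le_pi (by nlinarith) (by nlinarith))
  rw [h1]
  have h2 := Real.mul_le_sin (x := π * |y|) (by positivity) (by nlinarith)
  calc 2 * |y| = 2 / π * (π * |y|) := by field_simp
    _ ≤ Real.sin (π * |y|) := h2

lemma eucl_norm_le_sum {n : ℕ} (v : EuclideanSpace ℝ (Fin n)) : ‖v‖ ≤ ∑ j, |v j| := by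
  rw [EuclideanSpace.norm_eq]
  have h : ∑ j, ‖v j‖ ^ 2 ≤ (∑ j, |v j|) ^ 2 := by
    simp only [Real.norm_eq_abs]
    exact Finset.sum_sq_le_sq_sum_of_nonneg (fun i _ => abs_nonneg _)
  calc Real.sqrt (∑ j, ‖v j‖ ^ 2) ≤ Real.sqrt ((∑ j, |v j|) ^ 2) := Real.sqrt_le_sqrt h
    _ = ∑ j, |v j| := Real.sqrt_sq (Finset.sum_nonneg fun i _ => abs_nonneg _)

set_option maxHeartbeats 1000000 in
/-- in the lens space setting (`r 0 = 1`, `r j = q_j` for `j ≥ 1`,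
`ã_0 = q_0 a_0`, `ã_j = a_j - q_j a_0`), if `(ã_0,…,ã_m)` satisfies the
Diophantine bound `dist((t ã_j/(2π))_j, ℤ^{m+1}) ≥ C t^{1-ν}` for all `t ≥ 1`,
then there is `c > 0` such that for all `z ∈ ℂ^{m+1}`, `k ∈ ℤ`, `t ≥ 1`,
`∑_j |e^{i a_j t} - e^{2πi k r_j/q_0}| |z_j| ≥ c t^{1-ν} min_j |z_j|`. -/
theorem lens_diophantine_lower_bound (m : ℕ) (hm : 1 ≤ m)
    (a : Fin (m + 1) → ℝ) (ha : ∀ j, 0 < a j)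
    (q0 : ℕ) (hq0 : 1 < q0) (r : Fin (m + 1) → ℕ) (hr0 : r 0 = 1)
    (atil : Fin (m + 1) → ℝ) (hatil0 : atil 0 = q0 * a 0)
    (hatil : ∀ j : Fin (m + 1), j ≠ 0 → atil j = a j - (r j : ℝ) * a 0)
    (C ν : ℝ) (hC : 0 < C) (hν : 1 ≤ ν)
    (hdio : ∀ t : ℝ, 1 ≤ t →
      C * t ^ (1 - ν) ≤ Metric.infDist
        (show EuclideanSpace ℝ (Fin (m + 1)) from WithLp.toLp 2 (fun j => t * atil j / (2 * π)))
        (intLattice m)) :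
    ∃ c : ℝ, 0 < c ∧ ∀ z : Fin (m + 1) → ℂ, ∀ k : ℤ, ∀ t : ℝ, 1 ≤ t →
      c * t ^ (1 - ν) * (Finset.univ.inf' Finset.univ_nonempty fun j => ‖z j‖) ≤
        ∑ j, ‖Complex.exp (Complex.I * (a j : ℂ) * (t : ℂ)) -
          Complex.exp (2 * (π : ℂ) * Complex.I * (k : ℂ) * (r j : ℂ) / (q0 : ℂ))‖ *
          ‖z j‖ := by
  have hpi := Real.pi_pos
  have hpi0 : (π : ℝ) ≠ 0 := ne_of_gt hpi
  have hq0R : (0 : ℝ) < (q0 : ℝ) := by exact_mod_cast Nat.lt_of_lt_of_le Nat.zero_lt_one hq0.le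
  have hq0ne : (q0 : ℝ) ≠ 0 := ne_of_gt hq0R
  set S : ℝ := ∑ j, (r j : ℝ) with hSdef
  have hS : 0 ≤ S := Finset.sum_nonneg fun j _ => Nat.cast_nonneg _
  set B : ℝ := (q0 : ℝ) + S with hBdef
  have hBq : (q0 : ℝ) ≤ B := by simp [hBdef, hS]
  have hBr : ∀ j, (r j : ℝ) ≤ B := by
    intro j
    have : (r j : ℝ) ≤ S := Finset.single_le_sum (f := fun j => (r j : ℝ))
      (fun i _ => Nat.cast_nonneg _) (Finset.mem_univ j)
    simp only [hBdef]; linarith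
  have hB0 : 0 < B := lt_of_lt_of_le hq0R hBq
  set M : ℝ := (m + 1) * B + 1 with hMdef
  have hM : 0 < M := by positivity
  refine ⟨4 * C / M, by positivity, ?_⟩
  intro z k t ht
  have ht0 : 0 < t := lt_of_lt_of_le one_pos ht
  set x : Fin (m + 1) → ℝ := fun j => a j * t / (2 * π) - k * (r j : ℝ) / q0 with hxdef
  set d : Fin (m + 1) → ℝ := fun j => |x j - round (x j)| with hddef
  have hd : ∀ j, 0 ≤ d j := fun j => abs_nonneg _
  -- Step 1: Diophantine bound gives C t^(1-ν) ≤ M ∑ d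
  set v : EuclideanSpace ℝ (Fin (m + 1)) := WithLp.toLp 2 (fun j => t * atil j / (2 * π)) with hvdef
  set w : EuclideanSpace ℝ (Fin (m + 1)) := WithLp.toLp 2 (fun j =>
    if j = 0 then ((q0 : ℝ) * (round (x 0) : ℝ) + (k : ℝ))
    else ((round (x j) : ℝ) - (r j : ℝ) * (round (x 0) : ℝ))) with hwdef
  have hw0 : w 0 = (q0 : ℝ) * (round (x 0) : ℝ) + (k : ℝ) := by
    simp [hwdef]
  have hwj : ∀ j, j ≠ 0 → w j = (round (x j) : ℝ) - (r j : ℝ) * (round (x 0) : ℝ) := by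
    intro j hj; simp [hwdef, hj]
  have hw : w ∈ intLattice m := by
    intro j
    by_cases hj : j = 0
    · subst hj
      exact ⟨(q0 : ℤ) * round (x 0) + k, by rw [hw0]; push_cast; ring⟩
    · exact ⟨round (x j) - (r j : ℤ) * round (x 0), by rw [hwj j hj]; push_cast; ring⟩
  have hvw : ∀ j, |v j - w j| ≤ B * d 0 + d j := by
    intro j
    by_cases hj : j = 0
    · subst hj
      have hv0 : v 0 - w 0 = (q0 : ℝ) * (x 0 - round (x 0)) := by
        have key0 : t * atil 0 / (2 * π) = (q0 : ℝ) * x 0 + k := by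
          simp only [hxdef, hatil0, hr0]
          push_cast
          field_simp
          ring
        rw [hw0]
        simp only [hvdef, PiLp.toLp_apply]
        rw [key0]
        ring
      rw [hv0, abs_mul, abs_of_nonneg hq0R.le]
      simp only [hddef]
      nlinarith [hBq, abs_nonneg (x 0 - (round (x 0) : ℝ))]
    · have hvj : v j - w j = (x j - round (x j)) - (r j : ℝ) * (x 0 - round (x 0)) := by
        have key : t * atil j / (2 * π) = x j - (r j : ℝ) * x 0 := by
          simp only [hxdef, hatil j hj, hr0]
          push_cast
          field_simp
          ring
        rw [hwj j hj]
        simp only [hvdef, PiLp.toLp_apply]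
        rw [key]
        ring
      rw [hvj]
      simp only [hddef]
      calc |(x j - round (x j)) - (r j : ℝ) * (x 0 - round (x 0))|
          ≤ |x j - (round (x j) : ℝ)| + |(r j : ℝ) * (x 0 - round (x 0))| := abs_sub _ _
        _ = |x j - (round (x j) : ℝ)| + (r j : ℝ) * |x 0 - (round (x 0) : ℝ)| := by
            rw [abs_mul, Nat.abs_cast]
        _ ≤ B * |x 0 - (round (x 0) : ℝ)| + |x j - (round (x j) : ℝ)| := by
            nlinarith [hBr j, abs_nonneg (x 0 - (round (x 0) : ℝ))]
  have hdist : Metric.infDist v (intLattice m) ≤ M * ∑ j, d j := by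
    have h1 : Metric.infDist v (intLattice m) ≤ dist v w :=
      Metric.infDist_le_dist_of_mem hw
    have h2 : dist v w ≤ ∑ j, |v j - w j| := by
      rw [dist_eq_norm]
      have := eucl_norm_le_sum (v - w)
      simpa using this
    have h3 : ∑ j, |v j - w j| ≤ ∑ j, (B * d 0 + d j) :=
      Finset.sum_le_sum fun j _ => hvw j
    have hd0sum : d 0 ≤ ∑ j, d j :=
      Finset.single_le_sum (fun i _ => hd i) (Finset.mem_univ 0)
    have h4 : ∑ j, (B * d 0 + d j) = (m + 1 : ℝ) * (B * d 0) + ∑ j, d j := by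
      rw [Finset.sum_add_distrib, Finset.sum_const, Finset.card_univ]
      simp [mul_comm]
    have h5 : (m + 1 : ℝ) * (B * d 0) ≤ (m + 1 : ℝ) * B * (∑ j, d j) := by
      have hm1 : (0 : ℝ) ≤ (m + 1 : ℝ) := by positivity
      have h6 := mul_le_mul_of_nonneg_left hd0sum (mul_nonneg hm1 hB0.le)
      nlinarith [h6]
    calc Metric.infDist v (intLattice m) ≤ ∑ j, |v j - w j| := le_trans h1 h2
      _ ≤ (m + 1 : ℝ) * (B * d 0) + ∑ j, d j := by rw [← h4]; exact h3
      _ ≤ (m + 1 : ℝ) * B * (∑ j, d j) + ∑ j, d j := by linarith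
      _ = M * ∑ j, d j := by rw [hMdef]; push_cast; ring
  have hstep1 : C * t ^ (1 - ν) ≤ M * ∑ j, d j := le_trans (hdio t ht) hdist
  -- Step 2: 4 d j ≤ |E j|
  have hE : ∀ j, 4 * d j ≤ ‖Complex.exp (Complex.I * (a j : ℂ) * (t : ℂ)) -
      Complex.exp (2 * (π : ℂ) * Complex.I * (k : ℂ) * (r j : ℂ) / (q0 : ℂ))‖ := by
    intro j
    set θ : ℝ := 2 * π * k * (r j : ℝ) / q0 with hθdef
    have e2 : 2 * (π : ℂ) * Complex.I * (k : ℂ) * ((r j : ℕ) : ℂ) / (q0 : ℂ)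
        = ((θ : ℝ) : ℂ) * Complex.I := by
      rw [hθdef]; push_cast; ring
    have e1 : Complex.I * (a j : ℂ) * (t : ℂ)
        = ((a j * t - θ : ℝ) : ℂ) * Complex.I + ((θ : ℝ) : ℂ) * Complex.I := by
      push_cast; ring
    rw [e1, e2, Complex.exp_add]
    have e3 : Complex.exp (((a j * t - θ : ℝ) : ℂ) * Complex.I) *
        Complex.exp (((θ : ℝ) : ℂ) * Complex.I) - Complex.exp (((θ : ℝ) : ℂ) * Complex.I)
        = Complex.exp (((θ : ℝ) : ℂ) * Complex.I) *
          (Complex.exp (((a j * t - θ : ℝ) : ℂ) * Complex.I) - 1) := by ring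
    rw [e3, norm_mul, Complex.norm_exp_ofReal_mul_I, one_mul, abs_exp_I_sub_one]
    have hxj : (a j * t - θ) / 2 = π * x j := by
      rw [hθdef, hxdef]
      field_simp
    rw [hxj]
    have := two_mul_dist_le_abs_sin (x j)
    simp only [hddef]
    linarith
  have hsum : 4 * ∑ j, d j ≤ ∑ j, ‖Complex.exp (Complex.I * (a j : ℂ) * (t : ℂ)) -
      Complex.exp (2 * (π : ℂ) * Complex.I * (k : ℂ) * (r j : ℂ) / (q0 : ℂ))‖ := by
    rw [Finset.mul_sum]
    exact Finset.sum_le_sum fun j _ => hE j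
  -- Step 3: combine
  have ht1 : (0 : ℝ) < t ^ (1 - ν) := Real.rpow_pos_of_pos ht0 _
  have hstep3 : (4 * C / M) * t ^ (1 - ν) ≤
      ∑ j, ‖Complex.exp (Complex.I * (a j : ℂ) * (t : ℂ)) -
      Complex.exp (2 * (π : ℂ) * Complex.I * (k : ℂ) * (r j : ℂ) / (q0 : ℂ))‖ := by
    rw [div_mul_eq_mul_div, div_le_iff₀ hM, mul_comm _ M]
    have h7 := mul_le_mul_of_nonneg_left hsum hM.le
    calc 4 * C * t ^ (1 - ν) = 4 * (C * t ^ (1 - ν)) := by ring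
      _ ≤ 4 * (M * ∑ j, d j) := by linarith [hstep1]
      _ = M * (4 * ∑ j, d j) := by ring
      _ ≤ _ := h7
  set μ : ℝ := Finset.univ.inf' Finset.univ_nonempty fun j => ‖z j‖ with hμdef
  have hμ0 : 0 ≤ μ := Finset.le_inf' _ _ fun j _ => norm_nonneg _
  have hμle : ∀ j, μ ≤ ‖z j‖ := fun j =>
    Finset.inf'_le _ (Finset.mem_univ j)
  calc 4 * C / M * t ^ (1 - ν) * μ
      ≤ (∑ j, ‖Complex.exp (Complex.I * (a j : ℂ) * (t : ℂ)) -
          Complex.exp (2 * (π : ℂ) * Complex.I * (k : ℂ) * (r j : ℂ) / (q0 : ℂ))‖) * μ :=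
        mul_le_mul_of_nonneg_right hstep3 hμ0
    _ = ∑ j, ‖Complex.exp (Complex.I * (a j : ℂ) * (t : ℂ)) -
          Complex.exp (2 * (π : ℂ) * Complex.I * (k : ℂ) * (r j : ℂ) / (q0 : ℂ))‖ * μ :=
        Finset.sum_mul _ _ _
    _ ≤ ∑ j, ‖Complex.exp (Complex.I * (a j : ℂ) * (t : ℂ)) -
          Complex.exp (2 * (π : ℂ) * Complex.I * (k : ℂ) * (r j : ℂ) / (q0 : ℂ))‖ *
          ‖z j‖ :=
        Finset.sum_le_sum fun j _ => mul_le_mul_of_nonneg_left (hμle j) (norm_nonneg _)
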